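/- arXiv:2302.06158 — 2 statements merged into one kernel-verified Lean document; each statement's English description precedes it below -/
import Mathlib

section
/- Let X = {a,b} and let α, β, i, j be nonnegative integers. Define morphisms g_1, g_2 : X* → X* by g_1(a) = ε, g_1(b) = (a^α b a^β)^i, g_2(a) = a, g_2(b) = (b a^{α+β})^j b. Then g_1 ∘ g_2 = g_2 ∘ g_1. -/
/-- Words over the binary alphabet: `false` is the letter `a`, `true` is the letter `b`. -/
abbrev Word := List Bool

/-- The morphism of the free monoid determined by the images `g` of the letters. -/
def applyG (g : Bool → Word) (w : Word) : Word := w.flatMap g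

/-- `a^n`. -/
def rep (n : ℕ) : Word := List.replicate n false

/-- `b a^{α 1} b a^{α 2} ⋯ b a^{α (p-1)} b`, a word with `p` occurrences of `b`. -/
def blockWord (p : ℕ) (α : ℕ → ℕ) : Word :=
  ((List.range (p - 1)).flatMap fun i => true :: rep (α (i + 1))) ++ [true]

/-- `w^k`. -/
def wordPow (w : Word) (k : ℕ) : Word := (List.replicate k w).flatten

/-- `u` and `v` are `a`-conjugates. -/
def AConj (u v : Word) : Prop :=
  ∃ p q r s : ℕ, ∃ w : Word,
    u = rep p ++ w ++ rep q ∧ v = rep r ++ w ++ rep s ∧ p + q = r + s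

/-- `w` is the infinite word `ω(g)`: for every `n`, the word obtained from `g^n(b)` by deleting
all occurrences of `a` preceding the first occurrence of `b` is a prefix of `w`. -/
def IsOmega (g : Bool → Word) (w : ℕ → Bool) : Prop :=
  ∀ n k : ℕ, ∀ hk : k < (((applyG g)^[n] [true]).dropWhile (fun x => !x)).length,
    (((applyG g)^[n] [true]).dropWhile (fun x => !x)).get ⟨k, hk⟩ = w k

/-- `Aw w i` (for `i ≥ 1`): the number of occurrences of `a` in `w` strictly between the
`i`-th and `(i+1)`-th occurrences of `b` in `w`. -/
noncomputable def Aw (w : ℕ → Bool) (i : ℕ) : ℕ :=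
  Nat.nth (fun n => w n = true) i - Nat.nth (fun n => w n = true) (i - 1) - 1


lemma applyG_append (g : Bool → Word) (x y : Word) :
    applyG g (x ++ y) = applyG g x ++ applyG g y := List.flatMap_append

lemma wordPow_succ (w : Word) (k : ℕ) :
    wordPow w (k+1) = w ++ wordPow w k := by
  simp [wordPow, List.replicate_succ]

lemma wordPow_add (w : Word) (m n : ℕ) :
    wordPow w (m+n) = wordPow w m ++ wordPow w n := by
  induction m with
  | zero => simp [wordPow]
  | succ m ih => rw [Nat.succ_add, wordPow_succ, wordPow_succ, ih, List.append_assoc]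

lemma applyG_wordPow (g : Bool → Word) (w : Word) (k : ℕ) :
    applyG g (wordPow w k) = wordPow (applyG g w) k := by
  induction k with
  | zero => simp [wordPow, applyG]
  | succ k ih => rw [wordPow_succ, applyG_append, ih, wordPow_succ]

lemma wordPow_wordPow (w : Word) (m n : ℕ) :
    wordPow (wordPow w m) n = wordPow w (n*m) := by
  induction n with
  | zero => simp [wordPow]
  | succ n ih => rw [wordPow_succ, ih, Nat.succ_mul, Nat.add_comm, wordPow_add]

lemma applyG_rep_nil (g : Bool → Word) (h : g false = []) (n : ℕ) :
    applyG g (rep n) = [] := by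
  induction n with
  | zero => rfl
  | succ n ih =>
    show applyG g (false :: rep n) = []
    simp only [applyG, List.flatMap_cons, h, List.nil_append]
    exact ih

lemma applyG_rep_id (g : Bool → Word) (h : g false = [false]) (n : ℕ) :
    applyG g (rep n) = rep n := by
  induction n with
  | zero => rfl
  | succ n ih =>
    show applyG g (false :: rep n) = rep (n+1)
    simp only [applyG, List.flatMap_cons, h]
    rw [show (rep n).flatMap g = rep n from ih]
    rfl

lemma key (α β j : ℕ) :
    rep α ++ (wordPow ([true] ++ rep (α + β)) j ++ [true]) ++ rep β
      = wordPow (rep α ++ [true] ++ rep β) (j+1) := by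
  induction j with
  | zero => simp [wordPow]
  | succ j ih =>
    rw [wordPow_succ ([true] ++ rep (α+β)) j]
    have hrep : rep (α + β) = rep β ++ rep α := by
      rw [rep, Nat.add_comm, List.replicate_add]; rfl
    rw [wordPow_succ (rep α ++ [true] ++ rep β) (j+1), ← ih, hrep]
    simp only [List.append_assoc]

/-- `g₁(a)=ε`, `g₁(b)=(a^α b a^β)^i`, `g₂(a)=a`, `g₂(b)=(b a^{α+β})^j b`
commute. -/
theorem stmt5 (α β i j : ℕ) (g₁ g₂ : Bool → Word)
    (h₁a : g₁ false = [])
    (h₁b : g₁ true = wordPow (rep α ++ [true] ++ rep β) i)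
    (h₂a : g₂ false = [false])
    (h₂b : g₂ true = wordPow ([true] ++ rep (α + β)) j ++ [true]) :
    applyG g₁ ∘ applyG g₂ = applyG g₂ ∘ applyG g₁ := by
  have hb : applyG g₁ (g₂ true) = applyG g₂ (g₁ true) := by
    rw [h₂b, h₁b, applyG_append, applyG_wordPow, applyG_append,
      applyG_wordPow, applyG_append, applyG_append,
      applyG_rep_nil g₁ h₁a, applyG_rep_id g₂ h₂a, applyG_rep_id g₂ h₂a]
    simp only [applyG, List.flatMap_cons, List.flatMap_nil, List.append_nil, h₁b, h₂b]
    rw [key, wordPow_wordPow, wordPow_wordPow]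
    have : wordPow (rep α ++ [true] ++ rep β) (j*i) ++ wordPow (rep α ++ [true] ++ rep β) i
        = wordPow (rep α ++ [true] ++ rep β) (j*i+i) := (wordPow_add _ _ _).symm
    rw [this]
    ring_nf
  have ha : applyG g₁ (g₂ false) = applyG g₂ (g₁ false) := by
    simp [h₁a, h₂a, applyG]
  funext w
  simp only [Function.comp_apply, applyG, List.flatMap_assoc]
  congr 1
  funext x
  cases x
  · simpa [applyG] using ha
  · simpa [applyG] using hb
end

section
/- Let h be as follows: h(a) = a^s and h(b) = a^{γ_1} b a^{α_1} b ⋯ b a^{α_{p-1}} b a^{γ_2} with s ≥ 1, p ≥ 2, exponents nonnegative. If the infinite word w = ω(h) is eventually periodic, then γ_1 = γ_2 = 0 and α_1 = α_2 = ⋯ = α_{p-1}. -/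
/-- the gap sequence -/
def Aseq (s p γ : ℕ) (α : ℕ → ℕ) (m : ℕ) : ℕ :=
  if h : 2 ≤ p ∧ (m+1) % p = 0 then
    γ + s * Aseq s p γ α ((m+1)/p - 1)
  else α (m % p + 1)
termination_by m
decreasing_by
  obtain ⟨hp, hd⟩ := h
  have hm : 1 ≤ m := by
    rcases Nat.eq_zero_or_pos m with rfl | h1
    · simp [Nat.mod_eq_of_lt hp] at hd
    · exact h1
  have h2 : (m+1)/p ≤ (m+1)/2 := Nat.div_le_div_left hp (by norm_num)
  have h3 : (m+1)/2 ≤ m := by omega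
  omega

theorem Aseq_pos (s p γ : ℕ) (α : ℕ → ℕ) (m : ℕ) (hp : 2 ≤ p) (hd : (m+1) % p = 0) :
    Aseq s p γ α m = γ + s * Aseq s p γ α ((m+1)/p - 1) := by
  rw [Aseq, dif_pos ⟨hp, hd⟩]

theorem Aseq_neg (s p γ : ℕ) (α : ℕ → ℕ) (m : ℕ) (hd : ¬ (m+1) % p = 0) :
    Aseq s p γ α m = α (m % p + 1) := by
  rw [Aseq, dif_neg (by tauto)]

def toW (gs : List ℕ) : Word := true :: gs.flatMap (fun g => rep g ++ [true])

def alphas (p : ℕ) (α : ℕ → ℕ) : List ℕ := (List.range (p-1)).map (fun t => α (t+1))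

def Gs (s p γ₁ γ₂ : ℕ) (α : ℕ → ℕ) : ℕ → List ℕ
  | 0 => []
  | n+1 => alphas p α ++ (Gs s p γ₁ γ₂ α n).flatMap (fun g => (γ₂ + s * g + γ₁) :: alphas p α)

def Ls (s γ₁ : ℕ) : ℕ → ℕ | 0 => 0 | n+1 => s * Ls s γ₁ n + γ₁
def Rs (s γ₂ : ℕ) : ℕ → ℕ | 0 => 0 | n+1 => s * Rs s γ₂ n + γ₂

theorem rep_append (a b : ℕ) : rep a ++ rep b = rep (a+b) := by
  simp [rep, ← List.replicate_add]

theorem applyG_append_s9 (h : Bool → Word) (u v : Word) :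
    applyG h (u ++ v) = applyG h u ++ applyG h v := by
  simp [applyG]

theorem applyG_rep {h : Bool → Word} {s : ℕ} (ha : h false = rep s) (k : ℕ) :
    applyG h (rep k) = rep (s * k) := by
  induction k with
  | zero => simp [applyG, rep]
  | succ k ih =>
    have : rep (k+1) = false :: rep k := by simp [rep, List.replicate_succ]
    rw [this]
    simp only [applyG, List.flatMap_cons] at *
    rw [ih, ha, rep_append]
    ring_nf

theorem blockWord_eq_toW (p : ℕ) (α : ℕ → ℕ) : blockWord p α = toW (alphas p α) := by
  have key : ∀ (L : List ℕ) (f : ℕ → ℕ),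
      L.flatMap (fun i => true :: rep (f i)) ++ [true]
        = true :: L.flatMap (fun i => rep (f i) ++ [true]) := by
    intro L f
    induction L with
    | nil => simp
    | cons a L ih => simp [List.flatMap_cons, ih]
  unfold blockWord toW alphas
  rw [List.flatMap_map]
  exact key _ _


theorem toW_append (u v : List ℕ) :
    toW (u ++ v) = toW u ++ v.flatMap (fun g => rep g ++ [true]) := by
  simp [toW]

theorem shuffle (f : ℕ → ℕ) (B : Word) (c : ℕ) (gs : List ℕ) :
    rep c ++ gs.flatMap (fun g => rep (f g) ++ (B ++ rep c))
      = gs.flatMap (fun g => rep (c + f g) ++ B) ++ rep c := by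
  induction gs with
  | nil => simp
  | cons g gs ih =>
    simp only [List.flatMap_cons, List.append_assoc] at *
    rw [← List.append_assoc (rep c), rep_append]
    simp only [List.append_assoc, ih]

theorem applyG_toW {h : Bool → Word} {s p γ₁ γ₂ : ℕ} {α : ℕ → ℕ}
    (ha : h false = rep s)
    (hb : h true = rep γ₁ ++ blockWord p α ++ rep γ₂) (gs : List ℕ) :
    applyG h (toW gs) =
      rep γ₁ ++ toW (alphas p α ++ gs.flatMap (fun g => (γ₂ + s * g + γ₁) :: alphas p α))
        ++ rep γ₂ := by
  set BW := blockWord p α with hBW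
  have hBWtoW : BW = toW (alphas p α) := blockWord_eq_toW p α
  have lhs1 : applyG h (toW gs)
      = h true ++ gs.flatMap (fun g => rep (s * g + γ₁) ++ (BW ++ rep γ₂)) := by
    simp only [toW, applyG, List.flatMap_cons]
    congr 1
    rw [List.flatMap_assoc]
    congr 1
    funext g
    show (rep g ++ [true]).flatMap h = _
    rw [List.flatMap_append]
    have h1 : (rep g).flatMap h = rep (s * g) := applyG_rep ha g
    have h2 : [true].flatMap h = h true := by simp
    rw [h1, h2, hb, ← rep_append]
    simp [List.append_assoc]
  have rhs1 : toW (alphas p α ++ gs.flatMap (fun g => (γ₂ + s * g + γ₁) :: alphas p α))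
      = BW ++ gs.flatMap (fun g => rep (γ₂ + (s * g + γ₁)) ++ BW) := by
    rw [toW_append, hBWtoW]
    congr 1
    rw [List.flatMap_assoc]
    congr 1
    funext g
    show rep (γ₂ + s * g + γ₁) ++ [true]
        ++ (alphas p α).flatMap (fun g => rep g ++ [true]) = _
    have : γ₂ + s * g + γ₁ = γ₂ + (s * g + γ₁) := by ring
    rw [this]
    simp [toW, List.append_assoc]
  rw [lhs1, rhs1, hb]
  simp only [List.append_assoc]
  congr 2
  exact shuffle (fun g => s * g + γ₁) BW γ₂ gs

theorem iter_eq {h : Bool → Word} {s p γ₁ γ₂ : ℕ} {α : ℕ → ℕ}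
    (ha : h false = rep s)
    (hb : h true = rep γ₁ ++ blockWord p α ++ rep γ₂) (n : ℕ) :
    (applyG h)^[n] [true]
      = rep (Ls s γ₁ n) ++ toW (Gs s p γ₁ γ₂ α n) ++ rep (Rs s γ₂ n) := by
  induction n with
  | zero => simp [Ls, Rs, Gs, toW, rep]
  | succ n ih =>
    rw [Function.iterate_succ_apply', ih]
    rw [applyG_append_s9, applyG_append_s9, applyG_rep ha, applyG_rep ha,
      applyG_toW ha hb]
    show _ = rep (s * Ls s γ₁ n + γ₁) ++ toW (Gs s p γ₁ γ₂ α (n+1)) ++ rep (s * Rs s γ₂ n + γ₂)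
    rw [← rep_append, ← rep_append (s * Rs s γ₂ n) γ₂]
    simp only [Gs, List.append_assoc]
    congr 1
    rw [rep_append]
    have : γ₂ + s * Rs s γ₂ n = s * Rs s γ₂ n + γ₂ := by ring
    rw [this, rep_append]


theorem dropWhile_rep_true (k : ℕ) (t : Word) :
    List.dropWhile (fun x => !x) (rep k ++ true :: t) = true :: t := by
  induction k with
  | zero => simp [rep]
  | succ k ih =>
    have : rep (k+1) = false :: rep k := by simp [rep, List.replicate_succ]
    rw [this, List.cons_append, List.dropWhile_cons]
    simpa using ih

theorem dropWhile_iter {h : Bool → Word} {s p γ₁ γ₂ : ℕ} {α : ℕ → ℕ}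
    (ha : h false = rep s)
    (hb : h true = rep γ₁ ++ blockWord p α ++ rep γ₂) (n : ℕ) :
    ((applyG h)^[n] [true]).dropWhile (fun x => !x)
      = toW (Gs s p γ₁ γ₂ α n) ++ rep (Rs s γ₂ n) := by
  rw [iter_eq ha hb, List.append_assoc]
  show List.dropWhile _ (rep _ ++ (true :: _)) = _
  rw [dropWhile_rep_true]
  simp [toW]

theorem Aseq_small {s p γ : ℕ} {α : ℕ → ℕ} {t : ℕ} (ht : t + 1 < p) :
    Aseq s p γ α t = α (t + 1) := by
  rw [Aseq_neg _ _ _ _ _ (by rw [Nat.mod_eq_of_lt ht]; omega), Nat.mod_eq_of_lt (by omega)]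


theorem mapA_step {s p γ : ℕ} {α : ℕ → ℕ} (hp : 2 ≤ p) (N : ℕ) :
    List.map (Aseq s p γ α) (List.range (p * N + (p - 1)))
      = alphas p α ++ (List.range N).flatMap
          (fun j => (γ + s * Aseq s p γ α j) :: alphas p α) := by
  obtain ⟨P, rfl⟩ : ∃ P, p = P + 2 := ⟨p - 2, by omega⟩
  have hP : P + 2 - 1 = P + 1 := by omega
  induction N with
  | zero =>
    simp only [Nat.mul_zero, Nat.zero_add, List.range_zero, List.flatMap_nil, List.append_nil]
    apply List.map_congr_left
    intro t ht
    rw [List.mem_range, hP] at ht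
    exact Aseq_small (by omega)
  | succ N ih =>
    have h1 : (P + 2) * (N + 1) + (P + 2 - 1) = ((P + 2) * N + (P + 2 - 1)) + (P + 2) := by
      rw [hP]; ring
    rw [h1, List.range_add, List.map_append, ih]
    conv_rhs => rw [List.range_succ, List.flatMap_append, List.flatMap_singleton]
    rw [← List.append_assoc]
    congr 1
    set M := (P + 2) * N + (P + 2 - 1) with hM
    have h2 : List.range (P + 2) = 0 :: List.map Nat.succ (List.range (P + 1)) :=
      List.range_succ_eq_map (n := P + 1)
    rw [h2]
    simp only [List.map_cons, List.map_map]
    have hhead : Aseq s (P + 2) γ α (M + 0) = γ + s * Aseq s (P + 2) γ α N := by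
      have hm : M + 0 + 1 = (P + 2) * (N + 1) := by rw [hM, hP]; ring
      rw [Aseq_pos _ _ _ _ _ hp (by rw [hm]; exact Nat.mul_mod_right _ _), hm,
        Nat.mul_div_cancel_left _ (by omega : 0 < P + 2)]
      simp
    rw [hhead]
    congr 1
    show List.map _ _ = alphas (P + 2) α
    unfold alphas
    rw [hP]
    apply List.map_congr_left
    intro t ht
    rw [List.mem_range] at ht
    show Aseq s (P+2) γ α (M + Nat.succ t) = α (t + 1)
    have hm : M + Nat.succ t = t + (P + 2) * (N + 1) := by rw [hM, hP]; ring_nf; omega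
    rw [hm, Aseq_neg, Nat.add_mul_mod_self_left, Nat.mod_eq_of_lt (by omega)]
    have h4 : t + (P + 2) * (N + 1) + 1 = (t + 1) + (P + 2) * (N + 1) := by ring
    rw [h4, Nat.add_mul_mod_self_left, Nat.mod_eq_of_lt (by omega)]
    omega

theorem Gs_eq {s p γ₁ γ₂ : ℕ} {α : ℕ → ℕ} (hp : 2 ≤ p) (n : ℕ) :
    Gs s p γ₁ γ₂ α n = List.map (Aseq s p (γ₂ + γ₁) α) (List.range (p ^ n - 1)) := by
  induction n with
  | zero => simp [Gs]
  | succ n ih =>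
    have hpow : 1 ≤ p ^ n := Nat.one_le_pow _ _ (by omega)
    have h1 : p ^ (n+1) - 1 = p * (p ^ n - 1) + (p - 1) := by
      rcases Nat.exists_eq_add_of_le hpow with ⟨k, hk⟩
      have h2 : p ^ (n+1) = p + p * k := by rw [pow_succ, hk]; ring
      have h3 : p * (1 + k - 1) = p * k := by congr 1; omega
      rw [h2, hk, h3]
      omega
    rw [h1, mapA_step hp]
    show alphas p α ++ _ = _
    congr 1
    rw [ih, List.flatMap_map]
    apply List.flatMap_congr
    intro x _
    have : γ₂ + s * Aseq s p (γ₂ + γ₁) α x + γ₁ = γ₂ + γ₁ + s * Aseq s p (γ₂ + γ₁) α x := by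
      ring
    rw [this]

def Qof (A : ℕ → ℕ) : ℕ → ℕ
  | 0 => 0
  | m+1 => Qof A m + A m + 1

theorem Qof_mono (A : ℕ → ℕ) : StrictMono (Qof A) := by
  apply strictMono_nat_of_lt_succ
  intro n
  show Qof A n < Qof A n + A n + 1
  omega

theorem Qof_ge (A : ℕ → ℕ) (m : ℕ) : m ≤ Qof A m := by
  induction m with
  | zero => simp [Qof]
  | succ m ih => show m + 1 ≤ Qof A m + A m + 1; omega

theorem len_toW (A : ℕ → ℕ) (K : ℕ) :
    (toW (List.map A (List.range K))).length = Qof A K + 1 := by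
  induction K with
  | zero => simp [toW, Qof]
  | succ K ih =>
    rw [List.range_succ, List.map_append, toW_append]
    simp only [List.map_cons, List.map_nil, List.flatMap_cons, List.flatMap_nil,
      List.append_nil, List.length_append, ih]
    show _ = Qof A K + A K + 1 + 1
    simp [rep]
    omega

theorem toW_get_true (A : ℕ → ℕ) (K m : ℕ) (hm : m ≤ K) :
    (toW (List.map A (List.range K)))[Qof A m]? = some true := by
  induction K with
  | zero =>
    interval_cases m
    simp [toW, Qof]
  | succ K ih =>
    rw [List.range_succ, List.map_append, toW_append]
    simp only [List.map_cons, List.map_nil, List.flatMap_cons, List.flatMap_nil,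
      List.append_nil]
    rcases Nat.lt_or_ge m (K+1) with hlt | hge
    · rw [List.getElem?_append_left]
      · exact ih (by omega)
      · rw [len_toW]
        have := (Qof_mono A).monotone (show m ≤ K by omega)
        omega
    · have hm' : m = K + 1 := by omega
      subst hm'
      have hQ : Qof A (K+1) = (toW (List.map A (List.range K))).length + A K := by
        rw [len_toW]; show Qof A K + A K + 1 = _; omega
      rw [hQ, List.getElem?_append_right (by omega)]
      have : (toW (List.map A (List.range K))).length + A K
          - (toW (List.map A (List.range K))).length = A K := by omega
      rw [this]
      rw [List.getElem?_append_right (by simp [rep])]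
      simp [rep]

theorem toW_get_false (A : ℕ → ℕ) (K m i : ℕ) (hm : m < K)
    (h1 : Qof A m < i) (h2 : i < Qof A (m+1)) :
    (toW (List.map A (List.range K)))[i]? = some false := by
  induction K with
  | zero => omega
  | succ K ih =>
    rw [List.range_succ, List.map_append, toW_append]
    simp only [List.map_cons, List.map_nil, List.flatMap_cons, List.flatMap_nil,
      List.append_nil]
    rcases Nat.lt_or_ge m K with hlt | hge
    · rw [List.getElem?_append_left]
      · exact ih hlt
      · rw [len_toW]
        have := (Qof_mono A).monotone (show m + 1 ≤ K by omega)
        omega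
    · have hm' : K = m := by omega
      subst hm'
      have hlen : (toW (List.map A (List.range K))).length = Qof A K + 1 := len_toW A K
      rw [List.getElem?_append_right (by omega)]
      have h3 : i - (toW (List.map A (List.range K))).length < A K := by
        have : Qof A (K+1) = Qof A K + A K + 1 := rfl
        omega
      rw [List.getElem?_append_left (by simpa [rep] using h3)]
      simp [rep, List.getElem?_replicate, h3]

section Transfer

variable {s p γ₁ γ₂ : ℕ} {α : ℕ → ℕ} {h : Bool → Word} {w : ℕ → Bool}

theorem w_val (hp : 2 ≤ p) (ha : h false = rep s)
    (hb : h true = rep γ₁ ++ blockWord p α ++ rep γ₂) (hw : IsOmega h w)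
    (n k : ℕ) (v : Bool)
    (hv : (toW (List.map (Aseq s p (γ₂ + γ₁) α) (List.range (p ^ n - 1))))[k]? = some v) :
    w k = v := by
  have hlist := dropWhile_iter (s := s) (γ₁ := γ₁) (γ₂ := γ₂) (α := α) ha hb n
  rw [Gs_eq hp] at hlist
  set T := toW (List.map (Aseq s p (γ₂ + γ₁) α) (List.range (p ^ n - 1))) with hT
  have hk : k < T.length := by
    by_contra hcon
    rw [List.getElem?_eq_none (by omega)] at hv
    exact nomatch hv
  have hfull : (T ++ rep (Rs s γ₂ n))[k]? = some v := by
    rwa [List.getElem?_append_left hk]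
  have hk2 : k < (((applyG h)^[n] [true]).dropWhile (fun x => !x)).length := by
    rw [hlist, List.length_append]; omega
  have := hw n k hk2
  rw [← this]
  have : (((applyG h)^[n] [true]).dropWhile (fun x => !x))[k]? = some v := by
    rw [hlist]; exact hfull
  rw [List.getElem?_eq_getElem hk2] at this
  simpa [List.get_eq_getElem] using this

theorem w_true (hp : 2 ≤ p) (ha : h false = rep s)
    (hb : h true = rep γ₁ ++ blockWord p α ++ rep γ₂) (hw : IsOmega h w) (m : ℕ) :
    w (Qof (Aseq s p (γ₂ + γ₁) α) m) = true := by
  have hK : m ≤ p ^ m - 1 := by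
    have h2 : m < 2 ^ m := Nat.lt_two_pow_self (n := m)
    have h3 : 2 ^ m ≤ p ^ m := Nat.pow_le_pow_left hp m
    omega
  exact w_val hp ha hb hw m _ _ (toW_get_true _ _ _ hK)

theorem w_false (hp : 2 ≤ p) (ha : h false = rep s)
    (hb : h true = rep γ₁ ++ blockWord p α ++ rep γ₂) (hw : IsOmega h w) (m i : ℕ)
    (h1 : Qof (Aseq s p (γ₂ + γ₁) α) m < i) (h2 : i < Qof (Aseq s p (γ₂ + γ₁) α) (m+1)) :
    w i = false := by
  have hK : m < p ^ (m+1) - 1 := by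
    have h2 : m + 1 < 2 ^ (m+1) := Nat.lt_two_pow_self (n := m+1)
    have h3 : 2 ^ (m+1) ≤ p ^ (m+1) := Nat.pow_le_pow_left hp (m+1)
    omega
  exact w_val hp ha hb hw (m+1) _ _ (toW_get_false _ _ _ _ hK h1 h2)

theorem interval_exists (A : ℕ → ℕ) (i : ℕ) :
    ∃ m, Qof A m ≤ i ∧ i < Qof A (m+1) := by
  induction i with
  | zero => exact ⟨0, by simp [Qof], by show 0 < Qof A 0 + A 0 + 1; omega⟩
  | succ i ih =>
    obtain ⟨m, h1, h2⟩ := ih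
    rcases Nat.lt_or_ge (i+1) (Qof A (m+1)) with hlt | hge
    · exact ⟨m, by omega, hlt⟩
    · refine ⟨m+1, by omega, ?_⟩
      have : Qof A (m+1+1) = Qof A (m+1) + A (m+1) + 1 := rfl
      omega

theorem w_exists (hp : 2 ≤ p) (ha : h false = rep s)
    (hb : h true = rep γ₁ ++ blockWord p α ++ rep γ₂) (hw : IsOmega h w) (i : ℕ)
    (hi : w i = true) : ∃ m, Qof (Aseq s p (γ₂ + γ₁) α) m = i := by
  obtain ⟨m, h1, h2⟩ := interval_exists (Aseq s p (γ₂ + γ₁) α) i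
  rcases Nat.eq_or_lt_of_le h1 with heq | hlt
  · exact ⟨m, heq⟩
  · rw [w_false hp ha hb hw m i hlt h2] at hi
    exact Bool.noConfusion hi

end Transfer

section Core

variable {w : ℕ → Bool} {A : ℕ → ℕ} {N d : ℕ}

theorem near_b (hQ1 : ∀ m, w (Qof A m) = true) (hd : 1 ≤ d)
    (hper : ∀ i, N ≤ i → w (i + d) = w i) :
    ∀ x, N ≤ x → ∃ j, j < d ∧ w (x + j) = true := by
  have key : ∀ i, w i = true → ∀ x, N ≤ x → x ≤ i → ∃ j, j < d ∧ w (x + j) = true := by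
    intro i
    induction i using Nat.strong_induction_on with
    | _ i ih =>
      intro hi x hN hx
      rcases Nat.lt_or_ge i (x + d) with hlt | hge
      · exact ⟨i - x, by omega, by rwa [show x + (i - x) = i by omega]⟩
      · have hi' : w (i - d) = true := by
          have := hper (i - d) (by omega)
          rw [show i - d + d = i by omega] at this
          rw [← this]; exact hi
        exact ih (i - d) (by omega) hi' x hN (by omega)
  intro x hx
  exact key (Qof A x) (hQ1 x) x hx (Qof_ge A x)

theorem Abound (hQ1 : ∀ m, w (Qof A m) = true)
    (hQ2 : ∀ m i, Qof A m < i → i < Qof A (m+1) → w i = false)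
    (hd : 1 ≤ d) (hper : ∀ i, N ≤ i → w (i + d) = w i) :
    ∀ m, N ≤ m → A m < d := by
  intro m hm
  by_contra hcon
  push_neg at hcon
  have hx : N ≤ Qof A m + 1 := by have := Qof_ge A m; omega
  obtain ⟨j, hj, hbj⟩ := near_b hQ1 hd hper (Qof A m + 1) hx
  have h1 : Qof A m < Qof A m + 1 + j := by omega
  have h2 : Qof A m + 1 + j < Qof A (m+1) := by
    have : Qof A (m+1) = Qof A m + A m + 1 := rfl
    omega
  rw [hQ2 m _ h1 h2] at hbj
  exact Bool.noConfusion hbj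

/-- number of `b`s in the window `[x, x+d)` -/
def bcount (w : ℕ → Bool) (d x : ℕ) : ℕ :=
  ((Finset.Ico x (x + d)).filter (fun i => w i = true)).card

theorem bcount_succ (hd : 1 ≤ d) (hper : ∀ i, N ≤ i → w (i + d) = w i)
    (x : ℕ) (hx : N ≤ x) : bcount w d (x + 1) = bcount w d x := by
  unfold bcount
  have e1 : Finset.Ico (x+1) (x+1+d) = insert (x+d) (Finset.Ico (x+1) (x+d)) := by
    rw [show x+1+d = (x+d)+1 by omega]
    rw [Nat.Ico_succ_right_eq_insert_Ico (by omega)]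
  have e2 : Finset.Ico x (x+d) = insert x (Finset.Ico (x+1) (x+d)) := by
    rw [Finset.insert_Ico_add_one_left_eq_Ico (by omega)]
  rw [e1, e2, Finset.filter_insert, Finset.filter_insert]
  have hwx := hper x hx
  by_cases hb : w x = true
  · rw [if_pos (by rw [hwx]; exact hb), if_pos hb]
    rw [Finset.card_insert_of_notMem (by simp), Finset.card_insert_of_notMem (by simp)]
  · rw [if_neg (by rw [hwx]; exact hb), if_neg hb]

theorem bcount_const (hd : 1 ≤ d) (hper : ∀ i, N ≤ i → w (i + d) = w i)
    (x : ℕ) (hx : N ≤ x) : bcount w d x = bcount w d N := by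
  obtain ⟨k, rfl⟩ := Nat.exists_eq_add_of_le hx
  induction k with
  | zero => rfl
  | succ k ih =>
    rw [show N + (k+1) = (N + k) + 1 by omega, bcount_succ hd hper _ (by omega), ih (by omega)]

theorem count_between (hQ1 : ∀ m, w (Qof A m) = true)
    (hQ2 : ∀ m i, Qof A m < i → i < Qof A (m+1) → w i = false)
    (m k : ℕ) :
    ((Finset.Ico (Qof A m) (Qof A (m + k))).filter (fun i => w i = true)).card = k := by
  induction k with
  | zero => simp
  | succ k ih =>
    have hmono := Qof_mono A
    have h1 : Qof A m ≤ Qof A (m+k) := hmono.monotone (by omega)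
    have h2 : Qof A (m+k) ≤ Qof A (m+k+1) := hmono.monotone (by omega)
    rw [show m + (k+1) = (m+k)+1 by omega]
    rw [← Finset.Ico_union_Ico_eq_Ico h1 h2, Finset.filter_union]
    rw [Finset.card_union_of_disjoint]
    · have e3 : (Finset.Ico (Qof A (m+k)) (Qof A (m+k+1))).filter (fun i => w i = true)
          = {Qof A (m+k)} := by
        ext i
        simp only [Finset.mem_filter, Finset.mem_Ico, Finset.mem_singleton]
        constructor
        · rintro ⟨⟨hge, hlt⟩, hbi⟩
          by_contra hne
          rw [hQ2 (m+k) i (by omega) hlt] at hbi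
          exact Bool.noConfusion hbi
        · rintro rfl
          refine ⟨⟨le_refl _, ?_⟩, hQ1 _⟩
          exact hmono (by omega)
      rw [ih, e3, Finset.card_singleton]
    · exact Finset.disjoint_filter_filter (Finset.Ico_disjoint_Ico_consecutive _ _ _)

theorem Q_shift (hQ1 : ∀ m, w (Qof A m) = true)
    (hQ2 : ∀ m i, Qof A m < i → i < Qof A (m+1) → w i = false)
    (hQ3 : ∀ i, w i = true → ∃ m, Qof A m = i)
    (hd : 1 ≤ d) (hper : ∀ i, N ≤ i → w (i + d) = w i)
    (m : ℕ) (hm : N ≤ Qof A m) :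
    Qof A (m + bcount w d N) = Qof A m + d := by
  have hwb : w (Qof A m + d) = true := by rw [hper _ hm]; exact hQ1 m
  obtain ⟨m', hm'⟩ := hQ3 _ hwb
  have hgt : m < m' := by
    by_contra hcon
    push_neg at hcon
    have : Qof A m' ≤ Qof A m := (Qof_mono A).monotone hcon
    omega
  have hc : bcount w d (Qof A m) = m' - m := by
    have h0 := count_between (w := w) hQ1 hQ2 m (m' - m)
    rw [show m + (m' - m) = m' by omega] at h0
    unfold bcount
    rw [show Qof A m + d = Qof A m' from hm'.symm]
    exact h0
  rw [← bcount_const hd hper _ hm, hc, show m + (m' - m) = m' by omega, hm']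

theorem Aper (hQ1 : ∀ m, w (Qof A m) = true)
    (hQ2 : ∀ m i, Qof A m < i → i < Qof A (m+1) → w i = false)
    (hQ3 : ∀ i, w i = true → ∃ m, Qof A m = i)
    (hd : 1 ≤ d) (hper : ∀ i, N ≤ i → w (i + d) = w i) :
    ∃ t, 1 ≤ t ∧ ∀ m, N ≤ m → A (m + t) = A m := by
  set t := bcount w d N with ht
  have hbinf := near_b hQ1 hd hper N (le_refl N)
  have ht1 : 1 ≤ t := by
    obtain ⟨j, hj, hbj⟩ := hbinf
    rw [ht]
    unfold bcount
    rw [Nat.succ_le_iff, Finset.card_pos]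
    exact ⟨N + j, Finset.mem_filter.mpr ⟨Finset.mem_Ico.mpr ⟨by omega, by omega⟩, hbj⟩⟩
  refine ⟨t, ht1, ?_⟩
  intro m hm
  have hge := Qof_ge A m
  have h1 : Qof A (m + t) = Qof A m + d := Q_shift hQ1 hQ2 hQ3 hd hper m (by omega)
  have hge1 : N ≤ Qof A (m+1) := by have := Qof_ge A (m+1); omega
  have h2 : Qof A (m + 1 + t) = Qof A (m+1) + d := Q_shift hQ1 hQ2 hQ3 hd hper (m+1) hge1
  have e1 : Qof A (m+1) = Qof A m + A m + 1 := rfl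
  have e2 : Qof A (m+t+1) = Qof A (m+t) + A (m+t) + 1 := rfl
  have e3 : m + 1 + t = m + t + 1 := by omega
  rw [e3] at h2
  omega

end Core

theorem Apow {s p γ : ℕ} {α : ℕ → ℕ} (hs : 1 ≤ s) (hp : 2 ≤ p) (K : ℕ) :
    K * γ ≤ Aseq s p γ α (p ^ K - 1) := by
  induction K with
  | zero => omega
  | succ K ih =>
    have hpow : 1 ≤ p ^ K := Nat.one_le_pow _ _ (by omega)
    have hpow1 : 1 ≤ p ^ (K+1) := Nat.one_le_pow _ _ (by omega)
    have hm : p ^ (K+1) - 1 + 1 = p * p ^ K := by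
      rw [pow_succ] at hpow1 ⊢
      have h3 : p ^ K * p = p * p ^ K := by ring
      omega
    rw [Aseq_pos _ _ _ _ _ hp (by rw [hm]; exact Nat.mul_mod_right _ _), hm,
      Nat.mul_div_cancel_left _ (by omega : 0 < p)]
    have h1 : Aseq s p γ α (p ^ K - 1) ≤ s * Aseq s p γ α (p ^ K - 1) :=
      Nat.le_mul_of_pos_left _ (by omega)
    have h2 : K * γ ≤ s * Aseq s p γ α (p ^ K - 1) := le_trans ih h1
    calc (K+1) * γ = γ + K * γ := by ring
    _ ≤ γ + s * Aseq s p γ α (p ^ K - 1) := Nat.add_le_add_left h2 γ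

theorem Aform {s p : ℕ} {α : ℕ → ℕ} (hp : 2 ≤ p) :
    ∀ K n, 0 < n → n % p ≠ 0 → Aseq s p 0 α (p ^ K * n - 1) = s ^ K * α (n % p) := by
  intro K
  induction K with
  | zero =>
    intro n hn hnp
    rw [pow_zero, one_mul, pow_zero, one_mul]
    have hd : n % p + p * (n / p) = n := Nat.mod_add_div n p
    have hrp : n % p < p := Nat.mod_lt _ (by omega)
    have h1 : n - 1 = (n % p - 1) + p * (n / p) := by omega
    rw [Aseq_neg, h1, Nat.add_mul_mod_self_left, Nat.mod_eq_of_lt (by omega)]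
    · congr 1; omega
    · rw [show n - 1 + 1 = n by omega]; exact hnp
  | succ K ih =>
    intro n hn hnp
    have hpow : 1 ≤ p ^ K := Nat.one_le_pow _ _ (by omega)
    have hpos : 1 ≤ p ^ (K+1) * n := by
      have h1 : 1 ≤ p ^ (K+1) := Nat.one_le_pow _ _ (by omega)
      exact Nat.one_le_iff_ne_zero.mpr (by positivity)
    have hm : p ^ (K+1) * n - 1 + 1 = p * (p ^ K * n) := by
      have : p ^ (K+1) * n = p * (p ^ K * n) := by rw [pow_succ]; ring
      omega
    rw [Aseq_pos _ _ _ _ _ hp (by rw [hm]; exact Nat.mul_mod_right _ _), hm,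
      Nat.mul_div_cancel_left _ (by omega : 0 < p), ih n hn hnp, pow_succ]
    ring

theorem maxpow {p : ℕ} (hp : 2 ≤ p) :
    ∀ t, 0 < t → ∃ e r, 0 < r ∧ r % p ≠ 0 ∧ t = p ^ e * r := by
  intro t
  induction t using Nat.strong_induction_on with
  | _ t ih =>
    intro ht
    by_cases hdvd : t % p = 0
    · have hdvd' : p ∣ t := Nat.dvd_of_mod_eq_zero hdvd
      obtain ⟨t', rfl⟩ := hdvd'
      have ht' : 0 < t' := by
        rcases Nat.eq_zero_or_pos t' with rfl | hpos
        · simp at ht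
        · exact hpos
      obtain ⟨e, r, hr, hrp, heq⟩ := ih t' (by
        have h1 : 1 * t' < p * t' := mul_lt_mul_of_pos_right (by omega) ht'
        have h2 : 1 * t' = t' := one_mul t'
        omega) ht'
      exact ⟨e + 1, r, hr, hrp, by rw [heq, pow_succ]; ring⟩
    · exact ⟨0, t, ht, hdvd, by rw [pow_zero, one_mul]⟩

theorem pow_big {p : ℕ} (hp : 2 ≤ p) (K i : ℕ) (hi : 1 ≤ i) : K < p ^ K * i := by
  have h1 : K < 2 ^ K := Nat.lt_two_pow_self (n := K)
  have h2 : 2 ^ K ≤ p ^ K := Nat.pow_le_pow_left hp K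
  have h3 : p ^ K * 1 ≤ p ^ K * i := Nat.mul_le_mul_left _ hi
  omega

theorem stmt9_aux (s : ℕ) (hs : 1 ≤ s) (p : ℕ) (hp : 2 ≤ p) (γ₁ γ₂ : ℕ) (α : ℕ → ℕ)
    (h : Bool → Word)
    (ha : h false = rep s)
    (hb : h true = rep γ₁ ++ blockWord p α ++ rep γ₂)
    (w : ℕ → Bool) (hw : IsOmega h w)
    (hper : ∃ N d : ℕ, 1 ≤ d ∧ ∀ i, N ≤ i → w (i + d) = w i) :
    γ₁ = 0 ∧ γ₂ = 0 ∧
      ∀ i j, 1 ≤ i → i ≤ p - 1 → 1 ≤ j → j ≤ p - 1 → α i = α j := by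
  obtain ⟨N, d, hd, hper⟩ := hper
  have hQ1 := w_true hp ha hb hw
  have hQ2 := w_false hp ha hb hw
  have hQ3 := w_exists hp ha hb hw
  have hAb : ∀ m, N ≤ m → Aseq s p (γ₂ + γ₁) α m < d :=
    Abound hQ1 hQ2 hd hper
  have hγ : γ₂ + γ₁ = 0 := by
    by_contra hγ
    set K := N + d with hK
    have h1 : K < p ^ K := by have := pow_big hp K 1 (le_refl 1); omega
    have h2 : Aseq s p (γ₂ + γ₁) α (p ^ K - 1) < d := hAb _ (by omega)
    have h3 : K * (γ₂ + γ₁) ≤ Aseq s p (γ₂ + γ₁) α (p ^ K - 1) := Apow hs hp K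
    have h4 : K ≤ K * (γ₂ + γ₁) := Nat.le_mul_of_pos_right _ (by omega)
    omega
  have hγ2 : γ₂ = 0 := by omega
  have hγ1 : γ₁ = 0 := by omega
  subst hγ2; subst hγ1
  simp only [Nat.add_zero] at hQ1 hQ2 hQ3 hAb
  refine ⟨rfl, rfl, ?_⟩
  obtain ⟨t, ht1, hAper⟩ := Aper hQ1 hQ2 hQ3 hd hper
  obtain ⟨e, r, hr, hrp, hte⟩ := maxpow hp t ht1
  have key : ∀ i, 1 ≤ i → i < p → ∀ K, e < K → N ≤ K → s ^ K * α i = s ^ e * α (r % p) := by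
    intro i hi1 hi2 K hK hNK
    have hiK : K < p ^ K * i := pow_big hp K i hi1
    have hpos : 0 < p ^ K * i := by omega
    have hiform : Aseq s p 0 α (p ^ K * i - 1) = s ^ K * α i := by
      have him : i % p = i := Nat.mod_eq_of_lt hi2
      have := Aform (s := s) (α := α) hp K i (by omega) (by rw [him]; omega)
      rw [him] at this; exact this
    set n' := p ^ (K - e) * i + r with hn'
    have hsplit : p ^ e * n' = p ^ K * i + t := by
      rw [hn', Nat.mul_add, ← Nat.mul_assoc, ← pow_add,
        show e + (K - e) = K by omega, hte]
    have harg : p ^ K * i - 1 + t = p ^ e * n' - 1 := by omega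
    have hn'mod : n' % p = r % p := by
      obtain ⟨u, hu⟩ : ∃ u, K - e = u + 1 := ⟨K - e - 1, by omega⟩
      have hpp : p ^ (K - e) * i = p * (p ^ u * i) := by rw [hu, pow_succ]; ring
      rw [hn', hpp, Nat.mul_add_mod]
    have hn'pos : 0 < n' := by rw [hn']; omega
    have hform2 : Aseq s p 0 α (p ^ e * n' - 1) = s ^ e * α (n' % p) :=
      Aform hp e n' hn'pos (by rw [hn'mod]; omega)
    have hper2 : Aseq s p 0 α (p ^ K * i - 1 + t) = Aseq s p 0 α (p ^ K * i - 1) :=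
      hAper _ (by omega)
    rw [harg, hform2, hn'mod, hiform] at hper2
    exact hper2.symm
  intro i j hi1 hip hj1 hjp
  have hip' : i < p := by omega
  have hjp' : j < p := by omega
  set K0 := N + e + 1 with hK0
  have ei := key i hi1 hip' K0 (by omega) (by omega)
  have ei' := key i hi1 hip' (K0+1) (by omega) (by omega)
  have ej := key j hj1 hjp' K0 (by omega) (by omega)
  have ej' := key j hj1 hjp' (K0+1) (by omega) (by omega)
  rcases Nat.eq_or_lt_of_le hs with hs1 | hs2
  · have hs1' : s = 1 := hs1.symm
    subst hs1'
    simp only [one_pow, one_mul] at ei ej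
    rw [ei, ej]
  · have hss : 2 ≤ s := hs2
    have hzero : ∀ k, 1 ≤ k → k < p →
        s ^ K0 * α k = s ^ e * α (r % p) → s ^ (K0+1) * α k = s ^ e * α (r % p) → α k = 0 := by
      intro k hk1 hk2 e1 e2
      have hx : s ^ (K0+1) * α k = s * (s ^ K0 * α k) := by rw [pow_succ]; ring
      have h0 : s ^ K0 * α k = s * (s ^ K0 * α k) := by rw [← hx, e2, ← e1]
      set X := s ^ K0 * α k with hX
      rcases Nat.eq_zero_or_pos X with hX0 | hXpos
      · have hp0 : 0 < s ^ K0 := pow_pos (by omega) _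
        rcases Nat.mul_eq_zero.mp hX0 with h' | h'
        · omega
        · exact h'
      · exfalso
        have h2X : 2 * X ≤ s * X := Nat.mul_le_mul_right X hss
        omega
    rw [hzero i hi1 hip' ei ei', hzero j hj1 hjp' ej ej']


/-- if `ω(h)` is eventually periodic then `γ₁ = γ₂ = 0` and all `α_i`
(`1 ≤ i ≤ p-1`) are equal. -/
theorem stmt9 (s : ℕ) (hs : 1 ≤ s) (p : ℕ) (hp : 2 ≤ p) (γ₁ γ₂ : ℕ) (α : ℕ → ℕ)
    (h : Bool → Word)
    (ha : h false = rep s)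
    (hb : h true = rep γ₁ ++ blockWord p α ++ rep γ₂)
    (w : ℕ → Bool) (hw : IsOmega h w)
    (hper : ∃ N d : ℕ, 1 ≤ d ∧ ∀ i, N ≤ i → w (i + d) = w i) :
    γ₁ = 0 ∧ γ₂ = 0 ∧
      ∀ i j, 1 ≤ i → i ≤ p - 1 → 1 ≤ j → j ≤ p - 1 → α i = α j := by
  exact stmt9_aux s hs p hp γ₁ γ₂ α h ha hb w hw hper
end
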